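/- If P is a temporal beer path from x to y within [t_α, t_ω] through beer vertex b at active time t ∈ T_b, and Q' is a temporal x-b path with start(Q') ≥ start(Q) and end(Q') ≤ end(Q), where Q is the x-b prefix of P, then the concatenation of Q' with the b-y suffix of P (waiting at b) is a temporal beer path from x to y within [t_α, t_ω] through b at time t, with duration at most dura(P). -/

import Mathlib

open scoped Classical

structure TEdge (V : Type) where
  src : V
  dst : V
  t : ℝ
  len : ℝ

variable {V : Type}

/-- Consecutive compatibility of temporal edges. -/
def compat (e f : TEdge V) : Prop := e.dst = f.src ∧ e.t + e.len ≤ f.t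

/-- A temporal path from `x` to `y`: a nonempty list of temporal edges of `E`,
starting at `x`, ending at `y`, consecutively compatible. -/
def IsPath (E : Set (TEdge V)) (x y : V) (p : List (TEdge V)) : Prop :=
  p ≠ [] ∧ (∀ e ∈ p, e ∈ E) ∧ p.head?.map TEdge.src = some x ∧
    p.getLast?.map TEdge.dst = some y ∧ List.Chain' compat p

/-- Starting time of a temporal path. -/
def startT (p : List (TEdge V)) : ℝ := ((p.head?).map TEdge.t).getD 0

/-- Ending (arrival) time of a temporal path. -/
def endT (p : List (TEdge V)) : ℝ := ((p.getLast?).map (fun e => e.t + e.len)).getD 0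

/-- Distance (sum of traversal times) of a temporal path. -/
def distT (p : List (TEdge V)) : ℝ := (p.map TEdge.len).sum

/-- `p = q ++ r` witnesses a visit of beer vertex `b` at time `t`:
`b` is the endpoint of `q` (or the source `x` if `q` is empty), `t` is no
earlier than the arrival of the last edge of `q` and no later than the
departure of the first edge of `r`. -/
def BeerSplit (x b : V) (t : ℝ) (p q r : List (TEdge V)) : Prop :=
  p = q ++ r ∧ ((q.getLast?).map TEdge.dst).getD x = b ∧
    (∀ e ∈ q.getLast?, e.t + e.len ≤ t) ∧ (∀ e ∈ r.head?, t ≤ e.t)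

/-- A temporal beer path from `x` to `y`: a temporal path visiting some active
beer vertex `b ∈ B` at some time `t ∈ T b` between the arrival at `b` and the
departure from `b`. -/
def IsBeerPath (E : Set (TEdge V)) (B : Set V) (T : V → Set ℝ) (x y : V)
    (p : List (TEdge V)) : Prop :=
  IsPath E x y p ∧ ∃ b ∈ B, ∃ t ∈ T b, ∃ q r, BeerSplit x b t p q r

/-- The path `p` starts no earlier than `tα` and ends no later than `tω`. -/
def InWin (tα tω : ℝ) (p : List (TEdge V)) : Prop :=
  tα ≤ startT p ∧ endT p ≤ tω

/-- Exchange lemma for fastest beer paths: if `p = q ++ r` is a temporal beer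
path from `x` to `y` within `[tα, tω]` through beer vertex `b` at active time
`t`, and `Q'` is a temporal `x`-`b` path with `startT q ≤ startT Q'` and
`endT Q' ≤ endT q`, then `Q' ++ r` is a temporal beer path from `x` to `y`
within `[tα, tω]` through `b` at time `t`, with duration at most that of `p`. -/
theorem stmt15 (E : Set (TEdge V)) (B : Set V) (T : V → Set ℝ)
    (x y b : V) (t tα tω : ℝ) (p q r Q' : List (TEdge V))
    (hb : b ∈ B) (ht : t ∈ T b)
    (hp : IsPath E x y p) (hwin : InWin tα tω p)
    (hsplit : p = q ++ r) (hqne : q ≠ [])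
    (hqb : q.getLast?.map TEdge.dst = some b)
    (harr : ∀ e ∈ q.getLast?, e.t + e.len ≤ t)
    (hdep : ∀ e ∈ r.head?, t ≤ e.t)
    (hQ' : IsPath E x b Q')
    (hs : startT q ≤ startT Q') (hend : endT Q' ≤ endT q) :
    IsBeerPath E B T x y (Q' ++ r) ∧ InWin tα tω (Q' ++ r) ∧
    BeerSplit x b t (Q' ++ r) Q' r ∧
    endT (Q' ++ r) - startT (Q' ++ r) ≤ endT p - startT p := by
  obtain ⟨hQne, hQE, hQhead, hQlast, hQchain⟩ := hQ'
  obtain ⟨hpne, hpE, hphead, hplast, hpchain⟩ := hp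
  subst hsplit
  rw [show List.Chain' compat (q ++ r) ↔ _ from List.isChain_append] at hpchain
  obtain ⟨hqchain, hrchain, hqr⟩ := hpchain
  -- endT q ≤ t
  have hq_last : ∃ e, q.getLast? = some e := by
    cases hq : q.getLast? with
    | none => exact absurd (List.getLast?_eq_none_iff.mp hq) hqne
    | some e => exact ⟨e, rfl⟩
  obtain ⟨eq, heq⟩ := hq_last
  have hQ'_last : ∃ e, Q'.getLast? = some e := by
    cases hq : Q'.getLast? with
    | none => exact absurd (List.getLast?_eq_none_iff.mp hq) hQne
    | some e => exact ⟨e, rfl⟩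
  obtain ⟨eQ, heQ⟩ := hQ'_last
  have hendq : endT q = eq.t + eq.len := by simp [endT, heq]
  have hendQ : endT Q' = eQ.t + eQ.len := by simp [endT, heQ]
  have hendq_t : endT q ≤ t := by
    rw [hendq]; exact harr eq heq
  have hendQ_t : endT Q' ≤ t := le_trans hend hendq_t
  -- heads / starts
  have hstart_app : startT (Q' ++ r) = startT Q' := by
    simp [startT, List.head?_append_of_ne_nil _ hQne]
  have hstart_p : startT (q ++ r) = startT q := by
    simp [startT, List.head?_append_of_ne_nil _ hqne]
  -- ends
  have hend_app : endT (Q' ++ r) ≤ endT (q ++ r) := by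
    cases hr : r with
    | nil =>
      simp only [hr, List.append_nil]; exact hend
    | cons a as =>
      have h1 : (Q' ++ r).getLast? = r.getLast? := by
        rw [List.getLast?_append_of_ne_nil]; simp [hr]
      have h2 : (q ++ r).getLast? = r.getLast? := by
        rw [List.getLast?_append_of_ne_nil]; simp [hr]
      rw [hr] at h1 h2
      rw [endT, endT, h1, h2]
  -- compat between last of Q' and head of r
  have hbq : eq.dst = b := by
    rw [heq] at hqb; simpa using hqb
  have hbQ : eQ.dst = b := by
    rw [heQ] at hQlast; simpa using hQlast
  have hcompatQr : ∀ e ∈ Q'.getLast?, ∀ f ∈ r.head?, compat e f := by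
    intro e he f hf
    rw [heQ] at he; cases he
    constructor
    · have := hqr eq heq f hf
      rw [hbQ, ← this.1, hbq]
    · calc eQ.t + eQ.len = endT Q' := hendQ.symm
        _ ≤ t := hendQ_t
        _ ≤ f.t := hdep f hf
  have hpath : IsPath E x y (Q' ++ r) := by
    refine ⟨by simp [hQne], ?_, ?_, ?_, ?_⟩
    · intro e he
      rcases List.mem_append.mp he with h | h
      · exact hQE e h
      · exact hpE e (List.mem_append.mpr (Or.inr h))
    · rw [List.head?_append_of_ne_nil _ hQne]; exact hQhead
    · cases hr : r with
      | nil =>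
        simp only [hr, List.append_nil]
        rw [heQ]
        rw [hr, List.append_nil] at hplast
        rw [heq] at hplast
        simp only [Option.map_some] at hplast ⊢
        rw [hbQ, ← hbq]; exact hplast
      | cons a as =>
        rw [List.getLast?_append_of_ne_nil _ (by simp [hr])]
        rw [List.getLast?_append_of_ne_nil _ (by simp [hr])] at hplast
        rw [hr] at hplast; exact hplast
    · exact List.isChain_append.mpr ⟨hQchain, hrchain, hcompatQr⟩
  refine ⟨⟨hpath, b, hb, t, ht, Q', r, rfl, ?_, ?_, hdep⟩, ?_, ?_, ?_⟩
  · rw [heQ]; simpa using hbQ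
  · intro e he; rw [heQ] at he; cases he
    linarith [hendQ, hendQ_t]
  · constructor
    · rw [hstart_app]
      calc tα ≤ startT (q ++ r) := hwin.1
        _ = startT q := hstart_p
        _ ≤ startT Q' := hs
    · exact le_trans hend_app hwin.2
  · exact ⟨rfl, by rw [heQ]; simpa using hbQ, by intro e he; rw [heQ] at he; cases he; linarith [hendQ, hendQ_t], hdep⟩
  · have h1 : startT (q ++ r) ≤ startT (Q' ++ r) := by rw [hstart_app, hstart_p]; exact hs
    linarith [hend_app]
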